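/- Let q be a prime power and let n ≥ 2 be an integer such that (n−1) divides (q²−1). Let U = {α ∈ 𝔽_{q²} : α^{n−1} = 1} ∪ {0}. Then |U| = n and for every a ∈ U there exists β ∈ 𝔽_{q²} such that ∏_{b ∈ U, b ≠ a}(a−b) = β^{q+1}; indeed this product equals n−1 when a^{n−1} = 1 and equals −1 when a = 0, and every element of the subfield 𝔽_q is a (q+1)-st power in 𝔽_{q²}. -/

import Mathlib

noncomputable section

open Polynomial Finset

lemma aux_fixed_pow {q : ℕ} (hq2 : 2 ≤ q) {F : Type*} [Field F] [Fintype F] [DecidableEq F]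
    (hF : Fintype.card F = q ^ 2) :
    ∀ x : F, x ^ q = x → ∃ β : F, x = β ^ (q + 1) := by
  intro x hx
  rcases eq_or_ne x 0 with rfl | hx0
  · exact ⟨0, by rw [zero_pow (Nat.succ_ne_zero q)]⟩
  obtain ⟨g, hg⟩ := IsCyclic.exists_generator (α := Fˣ)
  have hog : orderOf g = q ^ 2 - 1 := by
    rw [orderOf_eq_card_of_forall_mem_zpowers hg, Nat.card_eq_fintype_card,
      Fintype.card_units, hF]
  set u : Fˣ := Units.mk0 x hx0 with hu
  obtain ⟨k, hk⟩ : ∃ k : ℕ, g ^ k = u := by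
    have : u ∈ Submonoid.powers g := by rw [mem_powers_iff_mem_zpowers]; exact hg u
    obtain ⟨k, hk⟩ := this; exact ⟨k, hk⟩
  have hxq1 : x ^ (q - 1) = 1 := by
    have : x ^ (q - 1) * x = 1 * x := by
      rw [one_mul, ← pow_succ, Nat.sub_add_cancel (by omega)]; exact hx
    exact mul_right_cancel₀ hx0 this
  have huq1 : u ^ (q - 1) = 1 := Units.ext (by
    push_cast
    exact hxq1)
  have hdvd1 : (q ^ 2 - 1) ∣ k * (q - 1) := by
    rw [← hog]
    apply orderOf_dvd_of_pow_eq_one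
    rw [pow_mul, hk, huq1]
  have hsq : q ^ 2 - 1 = (q + 1) * (q - 1) := by
    have := Nat.sq_sub_sq q 1
    simpa using this
  have hdvd2 : (q + 1) ∣ k := by
    rw [hsq] at hdvd1
    exact (Nat.mul_dvd_mul_iff_right (by omega : 0 < q - 1)).mp hdvd1
  obtain ⟨t, rfl⟩ := hdvd2
  refine ⟨(g : Fˣ) ^ t, ?_⟩
  have : ((g ^ t) ^ (q + 1) : Fˣ) = u := by rw [← pow_mul, mul_comm t, hk]
  calc x = ((u : Fˣ) : F) := rfl
    _ = (((g ^ t) ^ (q + 1) : Fˣ) : F) := by rw [this]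
    _ = ((g : F) ^ t) ^ (q + 1) := by push_cast; ring

lemma aux_char {q : ℕ} (hq : IsPrimePow q) {F : Type*} [Field F] [Fintype F]
    (hF : Fintype.card F = q ^ 2) :
    (∀ k : ℕ, ((k : F)) ^ q = (k : F)) ∧ ((-1 : F)) ^ q = -1 := by
  obtain ⟨p, v, hp, hv, rfl⟩ := hq
  have hp' : p.Prime := Nat.prime_iff.mpr hp
  haveI := ringChar.charP F
  obtain ⟨r, hr, hcard⟩ := FiniteField.card F (ringChar F)
  have hcp : ringChar F = p := by
    have h1 : ringChar F ∣ p ^ (v * 2) := by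
      rw [← pow_mul] at hF
      rw [← hF, hcard]
      exact dvd_pow_self (ringChar F) (by positivity)
    exact (Nat.prime_dvd_prime_iff_eq hr hp').mp (hr.dvd_of_dvd_pow h1)
  haveI : CharP F p := hcp ▸ ringChar.charP F
  haveI : ExpChar F p := ExpChar.prime hp'
  have key : ∀ x : F, x ^ p ^ v = iterateFrobenius F p v x := fun x =>
    (iterateFrobenius_def (p := p) v x).symm
  constructor
  · intro k
    rw [key, map_natCast]
  · rw [key, map_neg, map_one]

/-- Let `(n−1) ∣ (q²−1)` and
`U = {α ∈ 𝔽_{q²} : α^{n−1} = 1} ∪ {0}`.  Then `|U| = n`; for every `a ∈ U` the product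
`∏_{b ∈ U, b ≠ a} (a−b)` is a `(q+1)`-st power in `𝔽_{q²}`; this product equals `n−1`
when `a^{n−1} = 1` and equals `−1` when `a = 0`; and every element of the subfield
`𝔽_q` (i.e. every `x` with `x^q = x`) is a `(q+1)`-st power in `𝔽_{q²}`. -/
theorem evaluationSet_card_and_products_are_powers
    {q n : ℕ} (hq : IsPrimePow q) {F : Type*} [Field F] [Fintype F] [DecidableEq F]
    (hF : Fintype.card F = q ^ 2) (hn : 2 ≤ n) (hdvd : (n - 1) ∣ (q ^ 2 - 1)) :
    (((Finset.univ.filter fun α : F => α ^ (n - 1) = 1) ∪ {0}).card = n)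
    ∧ (∀ a ∈ (Finset.univ.filter fun α : F => α ^ (n - 1) = 1) ∪ {0}, ∃ β : F,
        ∏ b ∈ ((Finset.univ.filter fun α : F => α ^ (n - 1) = 1) ∪ {0}).erase a, (a - b)
          = β ^ (q + 1))
    ∧ (∀ a ∈ (Finset.univ.filter fun α : F => α ^ (n - 1) = 1) ∪ {0}, a ^ (n - 1) = 1 →
        ∏ b ∈ ((Finset.univ.filter fun α : F => α ^ (n - 1) = 1) ∪ {0}).erase a, (a - b)
          = ((n - 1 : ℕ) : F))
    ∧ (∏ b ∈ ((Finset.univ.filter fun α : F => α ^ (n - 1) = 1) ∪ {0}).erase 0,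
          ((0 : F) - b) = -1)
    ∧ (∀ x : F, x ^ q = x → ∃ β : F, x = β ^ (q + 1)) := by
  have hq2 : 2 ≤ q := hq.two_le
  set m := n - 1 with hmdef
  have hm0 : 0 < m := by omega
  have h4 : 4 ≤ q ^ 2 := by nlinarith
  have hN0 : 0 < q ^ 2 - 1 := by omega
  obtain ⟨g, hg⟩ := IsCyclic.exists_generator (α := Fˣ)
  have hog : orderOf g = q ^ 2 - 1 := by
    rw [orderOf_eq_card_of_forall_mem_zpowers hg, Nat.card_eq_fintype_card,
      Fintype.card_units, hF]
  have hζord : orderOf (g ^ ((q ^ 2 - 1) / m)) = m := by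
    rw [← hog]; exact orderOf_pow_orderOf_div (by omega) (hog ▸ hdvd)
  have hζ : IsPrimitiveRoot ((g ^ ((q ^ 2 - 1) / m) : Fˣ) : F) m := by
    have h := IsPrimitiveRoot.orderOf (g ^ ((q ^ 2 - 1) / m))
    rw [hζord] at h
    exact IsPrimitiveRoot.coe_units_iff.mpr h
  have hRset : (Finset.univ.filter fun α : F => α ^ m = 1) = nthRootsFinset m (1 : F) := by
    ext x; simp [Polynomial.mem_nthRootsFinset hm0 (1 : F)]
  have h0R : (0 : F) ∉ nthRootsFinset m (1 : F) := by
    simp [Polynomial.mem_nthRootsFinset hm0 (1 : F), zero_pow (by omega : m ≠ 0)]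
  have hU : (Finset.univ.filter fun α : F => α ^ m = 1) ∪ {0}
      = insert (0:F) (nthRootsFinset m (1 : F)) := by
    rw [hRset, Finset.union_comm]; rfl
  have hcardU : ((Finset.univ.filter fun α : F => α ^ m = 1) ∪ {0}).card = n := by
    rw [hU, Finset.card_insert_of_notMem h0R, hζ.card_nthRootsFinset]; omega
  have hpoly : (X : F[X]) ^ m - 1 = ∏ ζ ∈ nthRootsFinset m (1 : F), (X - C ζ) :=
    X_pow_sub_one_eq_prod hm0 hζ
  have hzero : ∏ b ∈ ((Finset.univ.filter fun α : F => α ^ m = 1) ∪ {0}).erase 0,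
      ((0 : F) - b) = -1 := by
    rw [hU, Finset.erase_insert h0R]
    have := congrArg (Polynomial.eval (0:F)) hpoly
    simpa [Polynomial.eval_prod, zero_pow (by omega : m ≠ 0)] using this.symm
  have hroot : ∀ a : F, a ^ m = 1 →
      ∏ b ∈ ((Finset.univ.filter fun α : F => α ^ m = 1) ∪ {0}).erase a, (a - b)
        = ((m : ℕ) : F) := by
    intro a ha
    have haR : a ∈ nthRootsFinset m (1 : F) := (Polynomial.mem_nthRootsFinset hm0 (1 : F)).2 ha
    have ha0 : a ≠ 0 := by
      intro h; rw [h, zero_pow (by omega : m ≠ 0)] at ha; exact zero_ne_one ha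
    rw [hU, Finset.erase_insert_of_ne (Ne.symm ha0),
      Finset.prod_insert (by simp [h0R, Finset.mem_erase])]
    have hsplit : (X : F[X]) ^ m - 1
        = (X - C a) * ∏ b ∈ (nthRootsFinset m (1 : F)).erase a, (X - C b) := by
      rw [hpoly]; exact (Finset.mul_prod_erase _ _ haR).symm
    have hder := congrArg (fun p => Polynomial.eval a (Polynomial.derivative p)) hsplit
    simp only [Polynomial.derivative_mul, Polynomial.derivative_sub,
      Polynomial.derivative_one, Polynomial.derivative_X_pow, Polynomial.derivative_X,
      Polynomial.derivative_C, Polynomial.eval_add, Polynomial.eval_mul,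
      Polynomial.eval_sub, Polynomial.eval_pow, Polynomial.eval_X, Polynomial.eval_C,
      Polynomial.eval_natCast, Polynomial.eval_one, sub_self, zero_mul, mul_one, one_mul,
      sub_zero, add_zero, zero_add, Polynomial.eval_prod, Polynomial.eval_mul] at hder
    have : a - 0 = a := sub_zero a
    rw [this, ← hder]
    calc a * (↑m * a ^ (m-1)) = ↑m * (a * a ^ (m-1)) := by ring
      _ = ↑m * a ^ m := by rw [← pow_succ', Nat.sub_add_cancel hm0]
      _ = ↑m := by rw [ha, mul_one]
  obtain ⟨hnat, hneg⟩ := aux_char hq hF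
  refine ⟨hcardU, ?_, fun a _ ha => hroot a ha, hzero, aux_fixed_pow hq2 hF⟩
  intro a ha
  rcases Finset.mem_union.mp ha with h | h
  · have ha' : a ^ m = 1 := (Finset.mem_filter.mp h).2
    rw [hroot a ha']
    exact aux_fixed_pow hq2 hF _ (hnat m)
  · have : a = 0 := Finset.mem_singleton.mp h
    subst this
    obtain ⟨β, hβ⟩ := aux_fixed_pow hq2 hF (-1) hneg
    exact ⟨β, by rw [hzero, hβ]⟩

end
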